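/- arXiv:1603.03733 — 3 statements merged into one kernel-verified Lean document; each statement's English description precedes it below -/
import Mathlib

section
/- For strictly positive discrete distributions, conditional independence satisfies the intersection axiom: if X ⟂⟂ Y | (Z, W) and X ⟂⟂ W | (Z, Y), then X ⟂⟂ (Y, W) | Z. -/
open Finset

/-- Intersection graphoid axiom for strictly positive discrete distributions.
`p a b c d` is the joint pmf of `(X, Y, W, Z)` at `(a, b, c, d)`.
Conditional independence `U ⟂⟂ V | S` is expressed via the cross-multiplication
identity `P(u,v,s) * P(s) = P(u,s) * P(v,s)`.
If `X ⟂⟂ Y | (Z, W)` and `X ⟂⟂ W | (Z, Y)`, then `X ⟂⟂ (Y, W) | Z`. -/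
theorem intersection_axiom_positive_discrete
    {A B C D : Type*} [Fintype A] [Fintype B] [Fintype C] [Fintype D]
    (p : A → B → C → D → ℝ)
    (hpos : ∀ a b c d, 0 < p a b c d)
    (hsum : ∑ a, ∑ b, ∑ c, ∑ d, p a b c d = 1)
    -- X ⟂⟂ Y | (Z, W):
    (h1 : ∀ a b c d, p a b c d * (∑ a', ∑ b', p a' b' c d)
      = (∑ b', p a b' c d) * (∑ a', p a' b c d))
    -- X ⟂⟂ W | (Z, Y):
    (h2 : ∀ a b c d, p a b c d * (∑ a', ∑ c', p a' b c' d)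
      = (∑ c', p a b c' d) * (∑ a', p a' b c d)) :
    -- X ⟂⟂ (Y, W) | Z:
    ∀ a b c d, p a b c d * (∑ a', ∑ b', ∑ c', p a' b' c' d)
      = (∑ b', ∑ c', p a b' c' d) * (∑ a', p a' b c d) := by
  intro a b c d
  have hA : Nonempty A := ⟨a⟩
  have hB : Nonempty B := ⟨b⟩
  have hC : Nonempty C := ⟨c⟩
  have pos2 : ∀ b' c', 0 < ∑ a', p a' b' c' d := fun b' c' =>
    Finset.sum_pos (fun a' _ => hpos a' b' c' d) Finset.univ_nonempty
  have pos12 : ∀ c', 0 < ∑ a', ∑ b', p a' b' c' d := fun c' =>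
    Finset.sum_pos (fun a' _ => Finset.sum_pos (fun b' _ => hpos _ _ _ _)
      Finset.univ_nonempty) Finset.univ_nonempty
  have pos23 : ∀ b', 0 < ∑ a', ∑ c', p a' b' c' d := fun b' =>
    Finset.sum_pos (fun a' _ => Finset.sum_pos (fun c' _ => hpos _ _ _ _)
      Finset.univ_nonempty) Finset.univ_nonempty
  set F : C → ℝ := fun c' => (∑ b', p a b' c' d) / (∑ a', ∑ b', p a' b' c' d) with hF
  -- the ratio is independent of c' (equals a quantity depending only on b')
  have hFG : ∀ b' c', F c'
      = (∑ c'', p a b' c'' d) / (∑ a', ∑ c'', p a' b' c'' d) := by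
    intro b' c'
    have e1 := h1 a b' c' d
    have e2 := h2 a b' c' d
    rw [hF]
    rw [div_eq_div_iff (pos12 c').ne' (pos23 b').ne']
    apply mul_right_cancel₀ (pos2 b' c').ne'
    linear_combination (∑ a', ∑ b'', p a' b'' c' d) * e2
      - (∑ a', ∑ c'', p a' b' c'' d) * e1
  -- hence p a b' c' d = F c * (∑ a', p a' b' c' d) for all b', c'
  have hp : ∀ b' c', p a b' c' d = F c * (∑ a', p a' b' c' d) := by
    intro b' c'
    have hFc : F c' = F c := (hFG b' c').trans (hFG b' c).symm
    have e1 := h1 a b' c' d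
    rw [← hFc, hF]
    rw [div_mul_eq_mul_div, eq_div_iff (pos12 c').ne']
    linear_combination e1
  have hswap : (∑ b', ∑ c', ∑ a', p a' b' c' d)
      = ∑ a', ∑ b', ∑ c', p a' b' c' d := by
    calc (∑ b', ∑ c', ∑ a', p a' b' c' d)
        = ∑ b', ∑ a', ∑ c', p a' b' c' d :=
          Finset.sum_congr rfl fun _ _ => Finset.sum_comm
      _ = ∑ a', ∑ b', ∑ c', p a' b' c' d := Finset.sum_comm
  have hT : (∑ b', ∑ c', p a b' c' d)
      = F c * (∑ a', ∑ b', ∑ c', p a' b' c' d) := by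
    calc (∑ b', ∑ c', p a b' c' d)
        = ∑ b', ∑ c', F c * (∑ a', p a' b' c' d) := by
          exact Finset.sum_congr rfl fun b' _ =>
            Finset.sum_congr rfl fun c' _ => hp b' c'
      _ = F c * (∑ b', ∑ c', ∑ a', p a' b' c' d) := by
          simp [Finset.mul_sum]
      _ = F c * (∑ a', ∑ b', ∑ c', p a' b' c' d) := by rw [hswap]
  rw [hp b c, hT]
  ring
end

section
/- Graph separation satisfies the intersection property: for pairwise disjoint vertex sets A, B, C, D, if C ∪ D separates A from B and C ∪ B separates A from D, then C separates A from B ∪ D. -/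
/-- `S` separates `A` from `B` in `G` if every walk from a vertex of `A` to a vertex of `B`
passes through some vertex of `S`. -/
def Separates {V : Type*} (G : SimpleGraph V) (A B S : Set V) : Prop :=
  ∀ a ∈ A, ∀ b ∈ B, ∀ p : G.Walk a b, ∃ v ∈ p.support, v ∈ S

private lemma length_takeUntil_lt' {V : Type*} [DecidableEq V] {G : SimpleGraph V} {u v w : V}
    (p : G.Walk v w) (h : u ∈ p.support) (hne : u ≠ w) :
    (p.takeUntil u h).length < p.length := by
  have hsplit := SimpleGraph.Walk.take_spec p h
  have hlen : (p.takeUntil u h).length + (p.dropUntil u h).length = p.length := by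
    rw [← SimpleGraph.Walk.length_append, hsplit]
  have hpos : 0 < (p.dropUntil u h).length := by
    rcases Nat.eq_zero_or_pos (p.dropUntil u h).length with h0 | h0
    · exact absurd ((p.dropUntil u h).eq_of_length_eq_zero h0) hne
    · exact h0
  omega

/-- Intersection property for graph separation: for pairwise disjoint `A, B, C, D`,
if `C ∪ D` separates `A` from `B` and `C ∪ B` separates `A` from `D`,
then `C` separates `A` from `B ∪ D`. -/
theorem separation_intersection {V : Type*} [Fintype V] (G : SimpleGraph V)
    (A B C D : Set V)
    (hAB : Disjoint A B) (hAC : Disjoint A C) (hAD : Disjoint A D)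
    (hBC : Disjoint B C) (hBD : Disjoint B D) (hCD : Disjoint C D)
    (h1 : Separates G A B (C ∪ D)) (h2 : Separates G A D (C ∪ B)) :
    Separates G A (B ∪ D) C := by
  classical
  suffices H : ∀ n a, a ∈ A → ∀ b, b ∈ B ∪ D → ∀ p : G.Walk a b, p.length ≤ n →
      ∃ v ∈ p.support, v ∈ C by
    intro a ha b hb p
    exact H p.length a ha b hb p le_rfl
  intro n
  induction n using Nat.strong_induction_on with
  | _ n IH =>
    intro a ha b hb p hlen
    rcases hb with hbB | hbD
    · obtain ⟨v, hv, hvCD⟩ := h1 a ha b hbB p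
      rcases hvCD with hvC | hvD
      · exact ⟨v, hv, hvC⟩
      · have hne : v ≠ b := fun h => (hBD.ne_of_mem hbB hvD) h.symm
        have hlt := length_takeUntil_lt' p hv hne
        obtain ⟨w, hw, hwC⟩ := IH (p.takeUntil v hv).length (lt_of_lt_of_le hlt hlen)
          a ha v (Or.inr hvD) (p.takeUntil v hv) le_rfl
        exact ⟨w, p.support_takeUntil_subset hv hw, hwC⟩
    · obtain ⟨v, hv, hvCB⟩ := h2 a ha b hbD p
      rcases hvCB with hvC | hvB
      · exact ⟨v, hv, hvC⟩
      · have hne : v ≠ b := fun h => (hBD.ne_of_mem hvB hbD) h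
        have hlt := length_takeUntil_lt' p hv hne
        obtain ⟨w, hw, hwC⟩ := IH (p.takeUntil v hv).length (lt_of_lt_of_le hlt hlen)
          a ha v (Or.inl hvB) (p.takeUntil v hv) le_rfl
        exact ⟨w, p.support_takeUntil_subset hv hw, hwC⟩
end

section
/- Let P be a strictly positive discrete distribution over the vertices of a finite simple graph G. Then P satisfies the mutual conditional independence property for every maximal independent set of G (i.e., for each maximal independent set I, the variables in I are mutually conditionally independent given V \ I) if and only if P satisfies the pairwise Markov property with respect to G. -/
open Finset

/-- A set of vertices is independent if no two of its elements are adjacent. -/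
def IsIndepSet {V : Type*} (G : SimpleGraph V) (s : Set V) : Prop :=
  ∀ ⦃x⦄, x ∈ s → ∀ ⦃y⦄, y ∈ s → ¬ G.Adj x y

/-- A maximal independent set (as a finset of vertices). -/
def IsMaxIndepSet {V : Type*} (G : SimpleGraph V) (I : Finset V) : Prop :=
  IsIndepSet G (I : Set V) ∧ ∀ J : Finset V, IsIndepSet G (J : Set V) → I ⊆ J → J = I

/-- Marginal of the pmf `p`, summing out the coordinates in `T`, the other
coordinates being fixed as in `x`. -/
noncomputable def marg {V : Type*} [Fintype V] [DecidableEq V] {S : V → Type*}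
    [∀ v, Fintype (S v)] (p : (∀ v, S v) → ℝ) (T : Finset V) (x : ∀ v, S v) : ℝ :=
  ∑ y : ∀ v : T, S v, p (fun v => if h : v ∈ T then y ⟨v, h⟩ else x v)

section helpers
variable {V : Type*} [Fintype V] [DecidableEq V] {S : V → Type*} [∀ v, Fintype (S v)]

/-- Update `x` on the coordinates in `A` using `z`. -/
def upd (x : ∀ v, S v) (A : Finset V) (z : ∀ v : A, S v) : ∀ v, S v :=
  fun v => if h : v ∈ A then z ⟨v, h⟩ else x v

lemma marg_def (p : (∀ v, S v) → ℝ) (T : Finset V) (x : ∀ v, S v) :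
    marg p T x = ∑ z : ∀ v : T, S v, p (upd x T z) := rfl

lemma marg_empty (p : (∀ v, S v) → ℝ) (x : ∀ v, S v) : marg p ∅ x = p x := by
  rw [marg_def]
  have h1 : ∀ z : (∀ v : ((∅ : Finset V) : Finset V), S v), upd x ∅ z = x := by
    intro z; funext v; simp [upd]
  simp only [h1]
  simp

lemma marg_congr (p : (∀ v, S v) → ℝ) {T : Finset V} {x y : ∀ v, S v}
    (h : ∀ v ∉ T, x v = y v) : marg p T x = marg p T y := by
  unfold marg
  refine Finset.sum_congr rfl fun z _ => ?_
  congr 1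
  funext v
  by_cases hv : v ∈ T
  · simp [hv]
  · simp [hv, h v hv]

lemma marg_pos {p : (∀ v, S v) → ℝ} (hpos : ∀ x, 0 < p x) (T : Finset V) (x : ∀ v, S v) :
    0 < marg p T x := by
  unfold marg
  have : Nonempty (∀ v : T, S v) := ⟨fun v => x v.1⟩
  exact Finset.sum_pos (fun i _ => hpos _) Finset.univ_nonempty

def splitEquiv (T A : Finset V) (hd : Disjoint T A) :
    ((∀ v : (A : Finset V), S v) × (∀ v : (T : Finset V), S v)) ≃
      (∀ v : ((T ∪ A : Finset V) : Finset V), S v) where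
  toFun zw v := if h : v.1 ∈ T then zw.2 ⟨v.1, h⟩
      else zw.1 ⟨v.1, (mem_union.mp v.2).resolve_left h⟩
  invFun y := (fun v => y ⟨v.1, mem_union_right T v.2⟩,
      fun v => y ⟨v.1, mem_union_left A v.2⟩)
  left_inv zw := by
    refine Prod.ext ?_ ?_
    · funext v
      have hv : v.1 ∉ T := fun hT => (hd.forall_ne_finset hT v.2) rfl
      simp [hv]
    · funext v
      simp [v.2]
  right_inv y := by
    funext v
    by_cases h : v.1 ∈ T <;> simp [h]

lemma marg_union (p : (∀ v, S v) → ℝ) {T A : Finset V} (hd : Disjoint T A) (x : ∀ v, S v) :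
    marg p (T ∪ A) x = ∑ z : ∀ v : A, S v, marg p T (upd x A z) := by
  simp only [marg_def]
  rw [← Equiv.sum_comp (splitEquiv T A hd) (fun y => p (upd x (T ∪ A) y)),
    Fintype.sum_prod_type]
  refine Finset.sum_congr rfl fun z _ => Finset.sum_congr rfl fun w _ => ?_
  congr 1
  funext v
  by_cases hT : v ∈ T
  · simp [upd, hT, splitEquiv]
  · by_cases hA : v ∈ A
    · simp [upd, hT, hA, splitEquiv]
    · simp [upd, hT, hA]

variable {p : (∀ v, S v) → ℝ} (hpos : ∀ x, 0 < p x)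
include hpos

/-- From cross-multiplied CI `X_A ⟂ X_E | rest`, the symmetric relation. -/
lemma CI_sym {A E : Finset V}
    (h : ∀ x, p x * marg p (A ∪ E) x = marg p A x * marg p E x)
    {x y : ∀ v, S v} (hxy : ∀ v ∉ E, x v = y v) :
    p x * marg p A y = p y * marg p A x := by
  have hb : marg p (A ∪ E) x = marg p (A ∪ E) y :=
    marg_congr p fun v hv => hxy v fun hE => hv (mem_union_right _ hE)
  have hdE : marg p E x = marg p E y := marg_congr p hxy
  have hx := h x
  have hy := h y
  rw [← hb, ← hdE] at hy
  have hbpos : (0:ℝ) < marg p (A ∪ E) x := marg_pos hpos _ _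
  apply mul_right_cancel₀ hbpos.ne'
  linear_combination marg p A y * hx - marg p A x * hy

/-- From the symmetric relation, recover cross-multiplied CI. -/
lemma CI_rec {A E : Finset V} (hd : Disjoint A E)
    (h : ∀ x y : ∀ v, S v, (∀ v ∉ E, x v = y v) → p x * marg p A y = p y * marg p A x) :
    ∀ x, p x * marg p (A ∪ E) x = marg p A x * marg p E x := by
  intro x
  have key : ∀ z : ∀ v : (E : Finset V), S v,
      p x * marg p A (upd x E z) = p (upd x E z) * marg p A x := by
    intro z
    refine h x _ fun v hv => ?_
    simp [upd, hv]
  calc p x * marg p (A ∪ E) x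
      = ∑ z : ∀ v : (E : Finset V), S v, p x * marg p A (upd x E z) := by
        rw [marg_union p hd x, Finset.mul_sum]
    _ = ∑ z : ∀ v : (E : Finset V), S v, p (upd x E z) * marg p A x :=
        Finset.sum_congr rfl fun z _ => key z
    _ = marg p E x * marg p A x := by rw [← Finset.sum_mul, ← marg_def]
    _ = marg p A x * marg p E x := mul_comm _ _

/-- Combine symmetric relations for `B` and `C` into one for `B ∪ C`. -/
lemma CI_comb {A B C : Finset V}
    (hB : ∀ x y : ∀ v, S v, (∀ v ∉ B, x v = y v) → p x * marg p A y = p y * marg p A x)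
    (hC : ∀ x y : ∀ v, S v, (∀ v ∉ C, x v = y v) → p x * marg p A y = p y * marg p A x) :
    ∀ x y : ∀ v, S v, (∀ v ∉ B ∪ C, x v = y v) → p x * marg p A y = p y * marg p A x := by
  intro x y hxy
  classical
  set x' : ∀ v, S v := fun v => if v ∈ B then y v else x v with hx'
  have h1 : p x * marg p A x' = p x' * marg p A x := by
    refine hB x x' fun v hv => ?_
    simp [hx', hv]
  have h2 : p x' * marg p A y = p y * marg p A x' := by
    refine hC x' y fun v hv => ?_
    by_cases hb : v ∈ B
    · simp [hx', hb]
    · simp [hx', hb, hxy v (fun hm => (mem_union.mp hm).elim hb hv)]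
  have hp1 : (0:ℝ) < p x' := hpos _
  have hp2 : (0:ℝ) < marg p A x' := marg_pos hpos _ _
  apply mul_right_cancel₀ (mul_pos hp1 hp2).ne'
  linear_combination (marg p A y * p x') * h1 + (p x' * marg p A x) * h2

/-- Intersection lemma. -/
lemma CI_int {A B C : Finset V} (hAB : Disjoint A B) (hAC : Disjoint A C)
    (hB : ∀ x, p x * marg p (A ∪ B) x = marg p A x * marg p B x)
    (hC : ∀ x, p x * marg p (A ∪ C) x = marg p A x * marg p C x) :
    ∀ x, p x * marg p (A ∪ (B ∪ C)) x = marg p A x * marg p (B ∪ C) x :=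
  CI_rec hpos (disjoint_union_right.mpr ⟨hAB, hAC⟩)
    (CI_comb hpos (fun _ _ h => CI_sym hpos hB h) (fun _ _ h => CI_sym hpos hC h))

/-- Main induction: `X_a ⟂ X_J | rest` for `J` a set of non-neighbours of `a`. -/
lemma CI_main {G : SimpleGraph V}
    (hpm : ∀ u v : V, u ≠ v → ¬ G.Adj u v →
      ∀ x : ∀ w, S w, p x * marg p {u, v} x = marg p {v} x * marg p {u} x)
    (a : V) (J : Finset V) (haJ : a ∉ J) (hadj : ∀ b ∈ J, ¬ G.Adj a b) :
    ∀ x, p x * marg p ({a} ∪ J) x = marg p {a} x * marg p J x := by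
  induction J using Finset.induction_on with
  | empty =>
    intro x
    rw [union_empty, marg_empty]
    ring
  | @insert b J hbJ ih =>
    have hab : a ≠ b := fun h => haJ (h ▸ mem_insert_self b J)
    have h1 : ∀ x, p x * marg p ({a} ∪ {b}) x = marg p {a} x * marg p {b} x := by
      intro x
      have := hpm a b hab (hadj b (mem_insert_self b J)) x
      rw [← insert_eq]
      linarith [this]
    have h2 := ih (fun h => haJ (mem_insert_of_mem h))
      (fun c hc => hadj c (mem_insert_of_mem hc))
    have h3 := CI_int hpos (disjoint_singleton.mpr hab)
      (disjoint_singleton_left.mpr fun h => haJ (mem_insert_of_mem h)) h1 h2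
    intro x
    have := h3 x
    rwa [← insert_eq b J] at this

/-- Product of singleton marginals over an independent set. -/
lemma CI_prod_singletons {G : SimpleGraph V}
    (hpm : ∀ u v : V, u ≠ v → ¬ G.Adj u v →
      ∀ x : ∀ w, S w, p x * marg p {u, v} x = marg p {v} x * marg p {u} x)
    {I : Finset V} (hI : ∀ ⦃x⦄, x ∈ I → ∀ ⦃y⦄, y ∈ I → ¬ G.Adj x y)
    (J : Finset V) (hJI : J ⊆ I) (hJne : J.Nonempty) :
    ∀ x, ∏ a ∈ J, marg p {a} x = p x ^ (J.card - 1) * marg p J x := by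
  induction hJne using Finset.Nonempty.cons_induction with
  | singleton a =>
    intro x
    simp
  | cons b J hbJ hJne ih =>
    intro x
    have hJI' : J ⊆ I := fun c hc => hJI (by simp [mem_cons, hc])
    have hbI : b ∈ I := hJI (mem_cons_self b J)
    have hQ := CI_main hpos hpm b J hbJ (fun c hc => hI hbI (hJI' hc)) x
    rw [← insert_eq b J] at hQ
    rw [Finset.prod_cons, ih hJI' x, Finset.cons_eq_insert, Finset.card_insert_of_notMem hbJ]
    have hcard : J.card - 1 + 1 = J.card := Nat.sub_add_cancel hJne.card_pos
    rw [Nat.add_sub_cancel]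
    calc marg p {b} x * (p x ^ (J.card - 1) * marg p J x)
        = p x ^ (J.card - 1) * (marg p {b} x * marg p J x) := by ring
      _ = p x ^ (J.card - 1) * (p x * marg p (insert b J) x) := by rw [hQ]
      _ = p x ^ (J.card - 1 + 1) * marg p (insert b J) x := by rw [pow_succ]; ring
      _ = p x ^ J.card * marg p (insert b J) x := by rw [hcard]

end helpers

/-- For a strictly positive discrete distribution `p` over the vertices of a finite simple
graph `G`: the mutual conditional independence property holds for every maximal independent
set `I` (the variables in `I` are mutually conditionally independent given the rest,
`P(x_I | x_{V\I}) = ∏_{v ∈ I} P(x_v | x_{V\I})`) if and only if `p` satisfies the pairwise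
Markov property w.r.t. `G` (`X_u ⟂⟂ X_v | rest` for every non-adjacent pair `u ≠ v`).
Both conditional independencies are stated in cross-multiplied form. -/
theorem MCIP_iff_pairwise_Markov
    {V : Type*} [Fintype V] [DecidableEq V] {S : V → Type*} [∀ v, Fintype (S v)]
    (G : SimpleGraph V) (p : (∀ v, S v) → ℝ)
    (hpos : ∀ x, 0 < p x) (hsum : ∑ x : ∀ v, S v, p x = 1) :
    (∀ I : Finset V, IsMaxIndepSet G I →
        ∀ x : ∀ v, S v,
          p x * (marg p I x) ^ (I.card - 1) = ∏ v ∈ I, marg p (I.erase v) x)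
    ↔ (∀ u v : V, u ≠ v → ¬ G.Adj u v →
        ∀ x : ∀ w, S w,
          p x * marg p {u, v} x = marg p {v} x * marg p {u} x) := by
  constructor
  · -- MCIP → pairwise Markov
    intro hm u v huv hadj x
    classical
    obtain ⟨I, hImax, huI, hvI⟩ : ∃ I : Finset V, IsMaxIndepSet G I ∧ u ∈ I ∧ v ∈ I := by
      have h0 : IsIndepSet G (({u, v} : Finset V) : Set V) := by
        intro a ha b hb
        simp only [coe_insert, coe_singleton, Set.mem_insert_iff,
          Set.mem_singleton_iff] at ha hb
        rcases ha with rfl | rfl <;> rcases hb with rfl | rfl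
        · exact G.irrefl
        · exact hadj
        · exact fun h => hadj h.symm
        · exact G.irrefl
      set 𝒮 := Finset.univ.powerset.filter
        (fun J : Finset V => IsIndepSet G (J : Set V) ∧ ({u, v} : Finset V) ⊆ J) with h𝒮
      have hne : 𝒮.Nonempty := ⟨{u, v}, by
        rw [h𝒮, mem_filter]
        exact ⟨mem_powerset.mpr (subset_univ _), h0, Finset.Subset.rfl⟩⟩
      obtain ⟨I, hI𝒮, hmax'⟩ := Finset.exists_max_image 𝒮 Finset.card hne
      simp only [h𝒮, mem_filter, mem_powerset] at hI𝒮
      refine ⟨I, ⟨hI𝒮.2.1, ?_⟩, hI𝒮.2.2 (by simp), hI𝒮.2.2 (by simp)⟩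
      intro J hJ hIJ
      have hJ𝒮 : J ∈ 𝒮 := by
        simp only [h𝒮, mem_filter, mem_powerset]
        exact ⟨subset_univ J, hJ, hI𝒮.2.2.trans hIJ⟩
      exact (Finset.eq_of_subset_of_card_le hIJ (hmax' J hJ𝒮)).symm
    have h := hm I hImax
    have huv' : u ∈ I.erase v := mem_erase.mpr ⟨huv, huI⟩
    have stepA : ∀ x y : ∀ w, S w, (∀ w, w ≠ v → x w = y w) →
        p x * marg p (I.erase v) y = p y * marg p (I.erase v) x := by
      intro x y hxy
      have hM : marg p I x = marg p I y :=
        marg_congr p fun w hw => hxy w fun hh => hw (hh ▸ hvI)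
      have hC : ∏ w ∈ I.erase v, marg p (I.erase w) x
          = ∏ w ∈ I.erase v, marg p (I.erase w) y := by
        refine Finset.prod_congr rfl fun w hw => marg_congr p fun a ha => ?_
        refine hxy a fun hh => ?_
        subst hh
        exact ha (mem_erase.mpr ⟨fun hh2 => (mem_erase.mp hw).1 hh2.symm, hvI⟩)
      have hx := h x
      have hy := h y
      rw [← Finset.mul_prod_erase I _ hvI] at hx hy
      rw [hC] at hx
      rw [← hM] at hy
      have hpow : (0:ℝ) < marg p I x ^ (I.card - 1) := pow_pos (marg_pos hpos _ _) _
      apply mul_right_cancel₀ hpow.ne'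
      linear_combination marg p (I.erase v) y * hx - marg p (I.erase v) x * hy
    have stepB : ∀ x y : ∀ w, S w, (∀ w, w ≠ v → x w = y w) →
        p x * marg p {u} y = p y * marg p {u} x := by
      intro x y hxy
      have hA := stepA x y hxy
      have hdag : marg p {u} x * marg p (I.erase v) y
          = marg p {u} y * marg p (I.erase v) x := by
        have key : ∀ z : ∀ w : ({u} : Finset V), S w,
            p (upd x {u} z) * marg p (I.erase v) y
              = p (upd y {u} z) * marg p (I.erase v) x := by
          intro z
          have h1 := stepA (upd x {u} z) (upd y {u} z) (fun w hw => by
            by_cases hwu : w ∈ ({u} : Finset V)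
            · simp [upd, hwu]
            · simp [upd, hwu, hxy w hw])
          have e1 : marg p (I.erase v) (upd y {u} z) = marg p (I.erase v) y :=
            marg_congr p fun a ha => by
              have hau : a ≠ u := fun hh => ha (hh ▸ huv')
              simp [upd, hau]
          have e2 : marg p (I.erase v) (upd x {u} z) = marg p (I.erase v) x :=
            marg_congr p fun a ha => by
              have hau : a ≠ u := fun hh => ha (hh ▸ huv')
              simp [upd, hau]
          rwa [e1, e2] at h1
        have hsum2 := Finset.sum_congr rfl (fun z (_ : z ∈ Finset.univ) => key z)
        rwa [← Finset.sum_mul, ← Finset.sum_mul, ← marg_def, ← marg_def] at hsum2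
      have hpsx : (0:ℝ) < marg p (I.erase v) x := marg_pos hpos _ _
      have hpsy : (0:ℝ) < marg p (I.erase v) y := marg_pos hpos _ _
      apply mul_right_cancel₀ (mul_pos hpsx hpsy).ne'
      linear_combination (marg p {u} y * marg p (I.erase v) x) * hA
        - (p y * marg p (I.erase v) x) * hdag
    have key2 : ∀ z : ∀ w : ({v} : Finset V), S w,
        p x * marg p {u} (upd x {v} z) = p (upd x {v} z) * marg p {u} x := by
      intro z
      refine stepB x (upd x {v} z) fun w hw => ?_
      have hwv : w ∉ ({v} : Finset V) := by simp [hw]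
      simp [upd, hwv]
    have hsum3 := Finset.sum_congr rfl (fun z (_ : z ∈ Finset.univ) => key2 z)
    rw [← Finset.mul_sum, ← Finset.sum_mul,
      ← marg_union p (disjoint_singleton.mpr huv) x, ← marg_def] at hsum3
    rwa [← insert_eq] at hsum3
  · -- pairwise Markov → MCIP
    intro hpm I hImax x
    by_cases hIne : I.Nonempty
    · have hind := hImax.1
      have hQ : ∀ a ∈ I, p x * marg p I x = marg p {a} x * marg p (I.erase a) x := by
        intro a ha
        have := CI_main hpos hpm a (I.erase a) (notMem_erase a I)
          (fun b hb => hind (Finset.mem_coe.mpr ha)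
            (Finset.mem_coe.mpr (mem_of_mem_erase hb))) x
        rwa [← insert_eq, insert_erase ha] at this
      have hprod : ∏ a ∈ I, marg p {a} x = p x ^ (I.card - 1) * marg p I x :=
        CI_prod_singletons hpos hpm
          (fun a ha b hb => hind (Finset.mem_coe.mpr ha) (Finset.mem_coe.mpr hb))
          I Finset.Subset.rfl hIne x
      have hk : I.card - 1 + 1 = I.card := Nat.sub_add_cancel hIne.card_pos
      have h1 : ∏ a ∈ I, (marg p {a} x * marg p (I.erase a) x)
          = (p x * marg p I x) ^ I.card := by
        rw [Finset.prod_congr rfl fun a ha => (hQ a ha).symm]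
        exact Finset.prod_const _
      have hpos2 : (0:ℝ) < p x ^ (I.card - 1) * marg p I x :=
        mul_pos (pow_pos (hpos x) _) (marg_pos hpos _ _)
      apply mul_right_cancel₀ hpos2.ne'
      calc p x * marg p I x ^ (I.card - 1) * (p x ^ (I.card - 1) * marg p I x)
          = (p x * marg p I x) ^ (I.card - 1 + 1) := by rw [pow_succ]; ring
        _ = (p x * marg p I x) ^ I.card := by rw [hk]
        _ = ∏ a ∈ I, (marg p {a} x * marg p (I.erase a) x) := h1.symm
        _ = (∏ a ∈ I, marg p {a} x) * ∏ a ∈ I, marg p (I.erase a) x :=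
            Finset.prod_mul_distrib
        _ = (∏ a ∈ I, marg p (I.erase a) x) * (p x ^ (I.card - 1) * marg p I x) := by
            rw [hprod]; ring
    · rw [Finset.not_nonempty_iff_eq_empty] at hIne
      subst hIne
      have hV : IsEmpty V := by
        by_contra hne
        rw [not_isEmpty_iff] at hne
        obtain ⟨v⟩ := hne
        have hsing : IsIndepSet G (({v} : Finset V) : Set V) := by
          intro a ha b hb
          simp only [coe_singleton, Set.mem_singleton_iff] at ha hb
          subst ha; subst hb; exact G.irrefl
        have hcontra := hImax.2 {v} hsing (empty_subset _)
        simp at hcontra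
      simp only [Finset.card_empty, Nat.zero_sub, pow_zero, mul_one, Finset.prod_empty]
      rw [← hsum]
      exact (Finset.sum_eq_single_of_mem x (mem_univ x)
        (fun b _ hb => absurd (funext fun w => isEmptyElim w) hb)).symm
end
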